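/- Let q ≡ 1 (mod 3) be an odd prime power, q ≥ 7. Then every connected component of the contraction graph of AGL(1,q) is either an isolated vertex or a cycle of length 6; if instead q is even with q ≡ 1 (mod 3), every non-isolated component is a cycle of length 3. -/

import Mathlib

/-- The set of affine permutations `x ↦ a x + b`, `a ≠ 0`, of the field `K`. -/
def AGL (K : Type*) [Field K] : Set (Equiv.Perm K) :=
  {π | ∃ a b : K, a ≠ 0 ∧ ∀ x, π x = a * x + b}

/-- Adjacency in the contraction graph of `AGL(1,q)` with distinguished element `F`. -/
def AGLAdj {K : Type*} [Field K] (F : K) (π σ : Equiv.Perm K) : Prop :=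
  π ∈ AGL K ∧ σ ∈ AGL K ∧ π F ≠ F ∧ σ F ≠ F ∧
    σ (π⁻¹ F) = π F ∧ π (σ⁻¹ F) = σ F

/-- The connected component of `π` in the contraction graph of `AGL(1,q)`. -/
def AGLComp {K : Type*} [Field K] (F : K) (π : Equiv.Perm K) : Set (Equiv.Perm K) :=
  {σ | Relation.ReflTransGen (AGLAdj F) π σ}

section af
variable {K : Type*} [Field K]

/-- The affine permutation `x ↦ a (x - F) + F + α`. -/
def af (F : K) (a : Kˣ) (α : K) : Equiv.Perm K where
  toFun x := a * (x - F) + F + α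
  invFun y := (a : K)⁻¹ * (y - F - α) + F
  left_inv x := by field_simp; ring
  right_inv y := by field_simp; ring

@[simp] lemma af_apply (F : K) (a : Kˣ) (α : K) (x : K) :
    af F a α x = a * (x - F) + F + α := rfl

@[simp] lemma af_inv_apply (F : K) (a : Kˣ) (α : K) (y : K) :
    (af F a α)⁻¹ y = (a : K)⁻¹ * (y - F - α) + F := rfl

lemma af_F (F : K) (a : Kˣ) (α : K) : af F a α F = F + α := by simp

lemma af_inv_F (F : K) (a : Kˣ) (α : K) : (af F a α)⁻¹ F = (a : K)⁻¹ * (-α) + F := by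
  simp [sub_sub]

lemma af_mem_AGL (F : K) (a : Kˣ) (α : K) : af F a α ∈ AGL K :=
  ⟨a, F - a * F + α, a.ne_zero, fun x => by simp; ring⟩

lemma af_inj {F : K} {a c : Kˣ} {α β : K} (h : af F a α = af F c β) :
    a = c ∧ α = β := by
  have h1 := congrFun (congrArg (fun (e : Equiv.Perm K) => (e : K → K)) h) F
  have h2 := congrFun (congrArg (fun (e : Equiv.Perm K) => (e : K → K)) h) (F + 1)
  simp at h1 h2
  constructor
  · ext; linear_combination h2 - h1
  · linear_combination h1

lemma AGL_eq_af {F : K} {π : Equiv.Perm K} (h : π ∈ AGL K) :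
    ∃ (a : Kˣ) (α : K), π = af F a α := by
  obtain ⟨a, b, ha, hx⟩ := h
  refine ⟨Units.mk0 a ha, (a - 1) * F + b, Equiv.ext fun x => ?_⟩
  rw [hx]; simp; ring

end af

section adj
variable {K : Type*} [Field K]

/-- Pure algebra: solving the adjacency equations. -/
lemma alg_iff {e : K} (he : e ^ 2 + e + 1 = 0) {t α β : K} (ht : t ≠ 0) (hα : α ≠ 0) :
    (β - t * α = α ∧ α - t⁻¹ * β = β) ↔
      ((t = e ∧ β = -(e ^ 2) * α) ∨ (t = e ^ 2 ∧ β = -e * α)) := by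
  have he0 : e ≠ 0 := by rintro rfl; simp at he
  have he3 : e ^ 3 = 1 := by linear_combination (e - 1) * he
  have hinv : e⁻¹ = e ^ 2 := inv_eq_of_mul_eq_one_right (by linear_combination he3)
  have hinv2 : (e ^ 2)⁻¹ = e := inv_eq_of_mul_eq_one_right (by linear_combination he3)
  constructor
  · rintro ⟨h1, h2⟩
    have h2' : t * α - β = t * β := by
      field_simp at h2; linear_combination h2
    have h0 : t ^ 2 + t + 1 = 0 := by
      have h : α * (t ^ 2 + t + 1) = 0 := by linear_combination (-(t + 1)) * h1 - h2'
      rcases mul_eq_zero.mp h with h | h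
      · exact absurd h hα
      · exact h
    have hq : (t - e) * (t - e ^ 2) = 0 := by
      linear_combination h0 - t * he + he3
    rcases mul_eq_zero.mp hq with h | h
    · have ht' : t = e := sub_eq_zero.mp h
      exact Or.inl ⟨ht', by linear_combination h1 + α * ht' + α * he⟩
    · have ht' : t = e ^ 2 := sub_eq_zero.mp h
      exact Or.inr ⟨ht', by linear_combination h1 + α * ht' + α * he⟩
  · rintro (⟨ht', hb⟩ | ⟨ht', hb⟩)
    · constructor
      · rw [ht', hb]; linear_combination -α * he
      · rw [ht', hb, hinv]; linear_combination α * he + α * e * he3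
    · constructor
      · rw [ht', hb]; linear_combination -α * he
      · rw [ht', hb, hinv2]; linear_combination α * he
end adj

section adj2
variable {K : Type*} [Field K]

lemma adj_af_iff' (F : K) (a c : Kˣ) (α β : K) :
    AGLAdj F (af F a α) (af F c β) ↔
      α ≠ 0 ∧ β ≠ 0 ∧
        (β - ((c : K) * (a : K)⁻¹) * α = α ∧ α - ((a : K) * (c : K)⁻¹) * β = β) := by
  have ha : (a : K) ≠ 0 := a.ne_zero
  have hc : (c : K) ≠ 0 := c.ne_zero
  constructor
  · rintro ⟨-, -, hπ, hσ, h1, h2⟩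
    have hα : α ≠ 0 := by
      intro h; exact hπ (by simp [af_F, h])
    have hβ : β ≠ 0 := by
      intro h; exact hσ (by simp [af_F, h])
    simp only [af_apply, af_inv_apply] at h1 h2
    exact ⟨hα, hβ, by linear_combination h1, by linear_combination h2⟩
  · rintro ⟨hα, hβ, e1, e2⟩
    refine ⟨af_mem_AGL F a α, af_mem_AGL F c β, ?_, ?_, ?_, ?_⟩
    · rw [af_F]; intro h; exact hα (by linear_combination h)
    · rw [af_F]; intro h; exact hβ (by linear_combination h)
    · simp only [af_apply, af_inv_apply]; linear_combination e1
    · simp only [af_apply, af_inv_apply]; linear_combination e2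

lemma adj_af_iff {e : K} (he : e ^ 2 + e + 1 = 0) (F : K) (a c : Kˣ) (α β : K) :
    AGLAdj F (af F a α) (af F c β) ↔
      α ≠ 0 ∧ (((c : K) = e * a ∧ β = -(e ^ 2) * α) ∨
               ((c : K) = e ^ 2 * a ∧ β = -e * α)) := by
  have ha : (a : K) ≠ 0 := a.ne_zero
  have hc : (c : K) ≠ 0 := c.ne_zero
  have he0 : e ≠ 0 := by rintro rfl; simp at he
  set t : K := (c : K) * (a : K)⁻¹ with htdef
  have ht : t ≠ 0 := mul_ne_zero hc (inv_ne_zero ha)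
  have htinv : (a : K) * (c : K)⁻¹ = t⁻¹ := by
    rw [htdef, mul_inv, inv_inv, mul_comm]
  rw [adj_af_iff', htinv]
  constructor
  · rintro ⟨hα, hβ, heqs⟩
    refine ⟨hα, ?_⟩
    rcases (alg_iff he ht hα).mp heqs with ⟨h1, h2⟩ | ⟨h1, h2⟩
    · refine Or.inl ⟨?_, h2⟩
      rw [htdef] at h1; field_simp at h1; linear_combination h1
    · refine Or.inr ⟨?_, h2⟩
      rw [htdef] at h1; field_simp at h1; linear_combination h1
  · rintro ⟨hα, (⟨h1, h2⟩ | ⟨h1, h2⟩)⟩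
    · have ht' : t = e := by rw [htdef, h1]; field_simp
      have hβ : β ≠ 0 := by
        rw [h2]; exact mul_ne_zero (neg_ne_zero.mpr (pow_ne_zero 2 he0)) hα
      exact ⟨hα, hβ, (alg_iff he ht hα).mpr (Or.inl ⟨ht', h2⟩)⟩
    · have ht' : t = e ^ 2 := by rw [htdef, h1]; field_simp
      have hβ : β ≠ 0 := by
        rw [h2]; exact mul_ne_zero (neg_ne_zero.mpr he0) hα
      exact ⟨hα, hβ, (alg_iff he ht hα).mpr (Or.inr ⟨ht', h2⟩)⟩

/-- neighbours of `af F a α` (for `α ≠ 0`). -/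
lemma neighbors_eq {e : K} (he : e ^ 2 + e + 1 = 0) (F : K) (a : Kˣ) (α : K)
    (eu : Kˣ) (heu : (eu : K) = e) {σ : Equiv.Perm K} :
    AGLAdj F (af F a α) σ ↔
      α ≠ 0 ∧ (σ = af F (eu * a) (-(e ^ 2) * α) ∨ σ = af F (eu ^ 2 * a) (-e * α)) := by
  constructor
  · intro h
    obtain ⟨c, β, rfl⟩ := AGL_eq_af (F := F) h.2.1
    rcases (adj_af_iff he F a c α β).mp h with ⟨hα, (⟨h1, h2⟩ | ⟨h1, h2⟩)⟩
    · refine ⟨hα, Or.inl ?_⟩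
      have : c = eu * a := Units.ext (by rw [h1]; simp [heu])
      rw [this, h2]
    · refine ⟨hα, Or.inr ?_⟩
      have : c = eu ^ 2 * a := Units.ext (by rw [h1]; simp [heu])
      rw [this, h2]
  · rintro ⟨hα, (rfl | rfl)⟩
    · exact (adj_af_iff he F a _ α _).mpr ⟨hα, Or.inl ⟨by simp [heu], rfl⟩⟩
    · exact (adj_af_iff he F a _ α _).mpr ⟨hα, Or.inr ⟨by simp [heu], rfl⟩⟩

end adj2

section orbit
variable {K : Type*} [Field K]

/-- The `k`-th vertex on the cycle through `af F a α`. -/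
def xo (F : K) (a : Kˣ) (α : K) (eu : Kˣ) (e : K) (k : ℕ) : Equiv.Perm K :=
  af F (eu ^ k * a) ((-(e ^ 2)) ^ k * α)

lemma e_ne_zero {e : K} (he : e ^ 2 + e + 1 = 0) : e ≠ 0 := by
  rintro rfl; simp at he

lemma e_cube {e : K} (he : e ^ 2 + e + 1 = 0) : e ^ 3 = 1 := by
  linear_combination (e - 1) * he

lemma xo_alpha_ne {e : K} (he : e ^ 2 + e + 1 = 0) {α : K} (hα : α ≠ 0) (k : ℕ) :
    (-(e ^ 2)) ^ k * α ≠ 0 :=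
  mul_ne_zero (pow_ne_zero _ (neg_ne_zero.mpr (pow_ne_zero _ (e_ne_zero he)))) hα

lemma xo_shift5 {e : K} (he : e ^ 2 + e + 1 = 0) (F : K) (a : Kˣ) (α : K)
    {eu : Kˣ} (heu3 : eu ^ 3 = 1) (k : ℕ) :
    xo F a α eu e (k + 5) =
      af F (eu ^ 2 * (eu ^ k * a)) (-e * ((-(e ^ 2)) ^ k * α)) := by
  have he3 := e_cube he
  unfold xo
  have h1 : eu ^ (k + 5) * a = eu ^ 2 * (eu ^ k * a) := by
    have : eu ^ (k + 5) = eu ^ 2 * eu ^ k := by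
      rw [show k + 5 = 2 + k + 3 by ring, pow_add, heu3, mul_one, pow_add]
    rw [this, mul_assoc]
  have h2 : (-(e ^ 2)) ^ (k + 5) * α = -e * ((-(e ^ 2)) ^ k * α) := by
    have h5 : ((-(e ^ 2) : K)) ^ 5 = -e := by
      have : ((-(e ^ 2) : K)) ^ 5 = -(e ^ 3) ^ 3 * e := by ring
      rw [this, he3]; ring
    rw [pow_add, h5]; ring
  rw [h1, h2]

lemma xo_shift1 (e : K) (F : K) (a : Kˣ) (α : K) (eu : Kˣ) (k : ℕ) :
    xo F a α eu e (k + 1) =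
      af F (eu * (eu ^ k * a)) (-(e ^ 2) * ((-(e ^ 2)) ^ k * α)) := by
  unfold xo
  rw [pow_succ', pow_succ', mul_assoc]
  ring_nf

lemma xo_adj_iff {e : K} (he : e ^ 2 + e + 1 = 0) (F : K) (a : Kˣ) {α : K}
    {eu : Kˣ} (heu : (eu : K) = e) (heu3 : eu ^ 3 = 1) (hα : α ≠ 0)
    (k : ℕ) (σ : Equiv.Perm K) :
    AGLAdj F (xo F a α eu e k) σ ↔
      σ = xo F a α eu e (k + 1) ∨ σ = xo F a α eu e (k + 5) := by
  rw [show xo F a α eu e k = af F (eu ^ k * a) ((-(e ^ 2)) ^ k * α) from rfl,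
    neighbors_eq he F _ _ eu heu, xo_shift1 e F a α eu,
    xo_shift5 he F a α heu3]
  have hne := xo_alpha_ne he hα k
  tauto

lemma xo_step {e : K} (he : e ^ 2 + e + 1 = 0) (F : K) (a : Kˣ) {α : K}
    {eu : Kˣ} (heu : (eu : K) = e) (heu3 : eu ^ 3 = 1) (hα : α ≠ 0) (k : ℕ) :
    AGLAdj F (xo F a α eu e k) (xo F a α eu e (k + 1)) :=
  (xo_adj_iff he F a heu heu3 hα k _).mpr (Or.inl rfl)

lemma comp_eq_range {e : K} (he : e ^ 2 + e + 1 = 0) (F : K) (a : Kˣ) {α : K}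
    {eu : Kˣ} (heu : (eu : K) = e) (heu3 : eu ^ 3 = 1) (hα : α ≠ 0) :
    AGLComp F (xo F a α eu e 0) = Set.range (xo F a α eu e) := by
  ext σ
  simp only [AGLComp, Set.mem_setOf_eq, Set.mem_range]
  constructor
  · intro h
    induction h with
    | refl => exact ⟨0, rfl⟩
    | tail _ hadj ih =>
      obtain ⟨k, rfl⟩ := ih
      rcases (xo_adj_iff he F a heu heu3 hα k _).mp hadj with rfl | rfl
      · exact ⟨k + 1, rfl⟩
      · exact ⟨k + 5, rfl⟩
  · rintro ⟨k, rfl⟩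
    induction k with
    | zero => exact Relation.ReflTransGen.refl
    | succ n ih =>
      exact Relation.ReflTransGen.tail ih (xo_step he F a heu heu3 hα n)

lemma xo_inj_mod {e : K} (he : e ^ 2 + e + 1 = 0) (F : K) (a : Kˣ) {α : K} (eu : Kˣ)
    (hα : α ≠ 0)
    {i j : ℕ} (h : xo F a α eu e i = xo F a α eu e j) :
    i ≡ j [MOD orderOf (-(e ^ 2) : K)] := by
  have h2 := (af_inj h).2
  have h3 : (-(e ^ 2) : K) ^ i = (-(e ^ 2)) ^ j := mul_right_cancel₀ hα h2
  have hm : (-(e ^ 2) : K) ≠ 0 := neg_ne_zero.mpr (pow_ne_zero _ (e_ne_zero he))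
  set mu : Kˣ := Units.mk0 _ hm with hmu
  have hcoe : ((mu : K)) = -(e ^ 2) := rfl
  have h4 : mu ^ i = mu ^ j := Units.ext (by push_cast [hcoe]; exact h3)
  have h5 := pow_eq_pow_iff_modEq.mp h4
  rwa [← hcoe, orderOf_units]

end orbit

section count
variable {K : Type*} [Field K]

lemma comp_isolated (F : K) (π : Equiv.Perm K) (hfix : π F = F) :
    AGLComp F π = {π} := by
  ext σ
  simp only [AGLComp, Set.mem_setOf_eq, Set.mem_singleton_iff]
  constructor
  · intro h
    induction h with
    | refl => rfl
    | tail _ hadj ih => exact absurd hfix (ih ▸ hadj.2.2.1)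
  · rintro rfl; exact Relation.ReflTransGen.refl

lemma xo_mul_add (e : K) (F : K) (a : Kˣ) (α : K) (eu : Kˣ) {n : ℕ}
    (hne : eu ^ n = 1) (hme : (-(e ^ 2) : K) ^ n = 1) (q r : ℕ) :
    xo F a α eu e (n * q + r) = xo F a α eu e r := by
  unfold xo
  rw [pow_add, pow_mul, hne, one_pow, one_mul, pow_add, pow_mul, hme, one_pow,
    one_mul]

lemma xo_mod (e : K) (F : K) (a : Kˣ) (α : K) (eu : Kˣ) {n : ℕ}
    (hne : eu ^ n = 1) (hme : (-(e ^ 2) : K) ^ n = 1) (k : ℕ) :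
    xo F a α eu e k = xo F a α eu e (k % n) := by
  conv_lhs => rw [← Nat.div_add_mod k n]
  exact xo_mul_add e F a α eu hne hme _ _

lemma ncard_range_xo {e : K} (he : e ^ 2 + e + 1 = 0) (F : K) (a : Kˣ) {α : K}
    (eu : Kˣ) (hα : α ≠ 0) {n : ℕ} (hord : orderOf (-(e ^ 2) : K) = n)
    (hne : eu ^ n = 1) (hnpos : 0 < n) :
    (Set.range (xo F a α eu e)).ncard = n := by
  classical
  have hme : (-(e ^ 2) : K) ^ n = 1 := by
    rw [← hord]; exact pow_orderOf_eq_one _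
  have hrange : Set.range (xo F a α eu e)
      = ↑((Finset.range n).image (xo F a α eu e)) := by
    ext σ
    simp only [Set.mem_range, Finset.coe_image, Set.mem_image, Finset.mem_coe,
      Finset.mem_range]
    constructor
    · rintro ⟨k, rfl⟩
      exact ⟨k % n, Nat.mod_lt _ hnpos, (xo_mod e F a α eu hne hme k).symm⟩
    · rintro ⟨k, -, rfl⟩; exact ⟨k, rfl⟩
  rw [hrange, Set.ncard_coe_finset, Finset.card_image_of_injOn, Finset.card_range]
  intro i hi j hj hij
  have hmod := xo_inj_mod he F a eu hα hij
  rw [hord] at hmod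
  simp only [Finset.mem_coe, Finset.mem_range] at hi hj
  unfold Nat.ModEq at hmod
  rwa [Nat.mod_eq_of_lt hi, Nat.mod_eq_of_lt hj] at hmod

lemma degree_two {e : K} (he : e ^ 2 + e + 1 = 0) (F : K) (a : Kˣ) {α : K}
    {eu : Kˣ} (heu : (eu : K) = e) (heu3 : eu ^ 3 = 1) (hα : α ≠ 0)
    {n : ℕ} (hord : orderOf (-(e ^ 2) : K) = n) (hn4 : ¬ n ∣ 4) (k : ℕ) :
    Set.ncard {τ : Equiv.Perm K | AGLAdj F (xo F a α eu e k) τ} = 2 := by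
  have hset : {τ : Equiv.Perm K | AGLAdj F (xo F a α eu e k) τ}
      = {xo F a α eu e (k + 1), xo F a α eu e (k + 5)} := by
    ext τ
    rw [Set.mem_setOf_eq, xo_adj_iff he F a heu heu3 hα k τ]
    simp [Set.mem_insert_iff]
  rw [hset]
  apply Set.ncard_pair
  intro h
  have hmod := xo_inj_mod he F a eu hα h
  rw [hord] at hmod
  have hd := (Nat.modEq_iff_dvd' (by omega)).mp hmod
  rw [show k + 5 - (k + 1) = 4 by omega] at hd
  exact hn4 hd

lemma main_component {e : K} (he : e ^ 2 + e + 1 = 0)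
    (F : K) {eu : Kˣ} (heu : (eu : K) = e) (heu3 : eu ^ 3 = 1)
    {n : ℕ} (hord : orderOf (-(e ^ 2) : K) = n) (hne : eu ^ n = 1)
    (hnpos : 0 < n) (hn4 : ¬ n ∣ 4)
    (π : Equiv.Perm K) (hπ : π ∈ AGL K) :
    (AGLComp F π).ncard = 1 ∨
      ((AGLComp F π).ncard = n ∧
        ∀ σ ∈ AGLComp F π, Set.ncard {τ : Equiv.Perm K | AGLAdj F σ τ} = 2) := by
  obtain ⟨a, α, rfl⟩ := AGL_eq_af (F := F) hπ
  by_cases hα : α = 0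
  · left
    subst hα
    rw [comp_isolated F _ (by rw [af_F, add_zero])]
    exact Set.ncard_singleton _
  · right
    have hx0 : af F a α = xo F a α eu e 0 := by
      unfold xo; rw [pow_zero, one_mul, pow_zero, one_mul]
    rw [hx0, comp_eq_range he F a heu heu3 hα]
    refine ⟨ncard_range_xo he F a eu hα hord hne hnpos, ?_⟩
    rintro σ ⟨k, rfl⟩
    exact degree_two he F a heu heu3 hα hord hn4 k

end count

/-- Every component of the contraction graph of `AGL(1,q)`, `q ≡ 1 (mod 3)`, is
an isolated vertex or a cycle of length 6 (`q` odd, `q ≥ 7`), resp. a cycle of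
length 3 (`q` even): a component with `n` vertices all of degree 2 that is
connected is a cycle of length `n`. -/
theorem stmt8 {K : Type*} [Field K] [Fintype K] (q : ℕ) (hq : Fintype.card K = q)
    (hq3 : q % 3 = 1) (F : K) :
    (Odd q → 7 ≤ q → ∀ π ∈ AGL K,
      (AGLComp F π).ncard = 1 ∨
        ((AGLComp F π).ncard = 6 ∧
          ∀ σ ∈ AGLComp F π, Set.ncard {τ : Equiv.Perm K | AGLAdj F σ τ} = 2)) ∧
    (Even q → ∀ π ∈ AGL K,
      (AGLComp F π).ncard = 1 ∨
        ((AGLComp F π).ncard = 3 ∧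
          ∀ σ ∈ AGLComp F π, Set.ncard {τ : Equiv.Perm K | AGLAdj F σ τ} = 2)) := by
  classical
  have hq1 : 1 ≤ q := hq ▸ Fintype.card_pos
  haveI : Fact (Nat.Prime 3) := ⟨by norm_num⟩
  have hdvd : 3 ∣ Fintype.card Kˣ := by
    rw [Fintype.card_units, hq]; omega
  obtain ⟨ζ, hζ⟩ := exists_prime_orderOf_dvd_card 3 hdvd
  have hζ3 : ζ ^ 3 = 1 := by rw [← hζ]; exact pow_orderOf_eq_one ζ
  set e : K := ((ζ : K)) with hedef
  have heu : ((ζ : K)) = e := rfl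
  have he3 : e ^ 3 = 1 := by
    rw [hedef, ← Units.val_pow_eq_pow_val, hζ3, Units.val_one]
  have he1 : e ≠ 1 := by
    intro h
    have hζ1 : ζ = 1 := Units.ext (by rw [← heu] at h; exact h)
    rw [hζ1, orderOf_one] at hζ
    norm_num at hζ
  have he : e ^ 2 + e + 1 = 0 := by
    have hfac : (e - 1) * (e ^ 2 + e + 1) = 0 := by linear_combination he3
    rcases mul_eq_zero.mp hfac with h | h
    · exact absurd (by linear_combination h) he1
    · exact h
  have he21 : e ^ 2 ≠ 1 := by
    intro h
    exact he1 (by linear_combination he3 - e * h)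
  have hm2 : (-(e ^ 2) : K) ^ 2 = e := by
    have h : (-(e ^ 2) : K) ^ 2 = e * e ^ 3 := by ring
    rw [h, he3, mul_one]
  have hm3 : (-(e ^ 2) : K) ^ 3 = -1 := by
    have h : (-(e ^ 2) : K) ^ 3 = -(e ^ 3) ^ 2 := by ring
    rw [h, he3]; norm_num
  have hm6 : (-(e ^ 2) : K) ^ 6 = 1 := by
    have h : (-(e ^ 2) : K) ^ 6 = (e ^ 3) ^ 4 := by ring
    rw [h, he3]; norm_num
  constructor
  · -- odd case
    intro hodd _ π hπ
    have hchar : ringChar K ≠ 2 := by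
      intro h
      have hev := FiniteField.even_card_of_char_two h
      rw [hq] at hev
      rcases hodd with ⟨t, ht⟩; omega
    have hneg1 : (-1 : K) ≠ 1 := by
      intro h
      have h2 : (2 : K) = 0 := by linear_combination -h
      have hpr : (ringChar K).Prime := CharP.char_is_prime K (ringChar K)
      have hdv : ringChar K ∣ 2 := (CharP.cast_eq_zero_iff K (ringChar K) 2).mp
        (by exact_mod_cast h2)
      exact hchar ((Nat.prime_dvd_prime_iff_eq hpr (by norm_num)).mp hdv)
    have hord : orderOf (-(e ^ 2) : K) = 6 := by
      have hd6 : orderOf (-(e ^ 2) : K) ∣ 6 := orderOf_dvd_of_pow_eq_one hm6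
      have h2 : ¬ orderOf (-(e ^ 2) : K) ∣ 2 := by
        intro h
        have := orderOf_dvd_iff_pow_eq_one.mp h
        rw [hm2] at this; exact he1 this
      have h3 : ¬ orderOf (-(e ^ 2) : K) ∣ 3 := by
        intro h
        have := orderOf_dvd_iff_pow_eq_one.mp h
        rw [hm3] at this; exact hneg1 this
      have hle : orderOf (-(e ^ 2) : K) ≤ 6 := Nat.le_of_dvd (by norm_num) hd6
      set d := orderOf (-(e ^ 2) : K) with hd
      interval_cases d <;> first | rfl | (revert hd6 h2 h3; norm_num)
    have hζ6 : ζ ^ 6 = 1 := by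
      rw [show (6 : ℕ) = 3 * 2 from rfl, pow_mul, hζ3, one_pow]
    exact main_component he F heu hζ3 hord hζ6 (by norm_num) (by norm_num) π hπ
  · -- even case
    intro heven π hπ
    have hchar : ringChar K = 2 := by
      rw [FiniteField.even_card_iff_char_two, hq]
      rcases heven with ⟨t, ht⟩; omega
    haveI : CharP K 2 := ringChar.of_eq hchar
    have hneg : (-(e ^ 2) : K) = e ^ 2 := CharTwo.neg_eq _
    have hord : orderOf (-(e ^ 2) : K) = 3 := by
      rw [hneg]
      refine orderOf_eq_prime ?_ he21
      rw [← pow_mul]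
      rw [show 2 * 3 = 3 * 2 from rfl, pow_mul, he3, one_pow]
    exact main_component he F heu hζ3 hord hζ3 (by norm_num) (by norm_num) π hπ
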